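/- An order-enriched functor P : A → X is strongly order-solid if and only if P is order-solid (in the weighted-cocone sense) and order-faithful. -/

import Mathlib

open CategoryTheory Opposite

universe w v₂ u₂ v u v' u'

/-- A `W`-weighted cocone over an order-enriched diagram `F : D ⥤ C` with weight
`W : Dᵒᵖ ⥤ Pos`: a natural transformation `W ⟶ C(F -, pt)`. -/
structure WeightedCocone {C : Type u} [Category.{v} C] [∀ a b : C, PartialOrder (a ⟶ b)]
    {D : Type u₂} [Category.{v₂} D] (W : Dᵒᵖ ⥤ PartOrd.{w}) (F : D ⥤ C) where
  pt : C
  leg : ∀ i : D, W.obj (op i) → (F.obj i ⟶ pt)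
  leg_mono : ∀ i : D, Monotone (leg i)
  leg_nat : ∀ {i j : D} (d : i ⟶ j) (v : W.obj (op j)),
    F.map d ≫ leg j v = leg i ((W.map d.op).hom.toFun v)

/-- A weighted cocone is a weighted colimit if it is universal among weighted cocones
and order-epic. -/
def IsWeightedColimit {C : Type u} [Category.{v} C] [∀ a b : C, PartialOrder (a ⟶ b)]
    {D : Type u₂} [Category.{v₂} D] {W : Dᵒᵖ ⥤ PartOrd.{w}} {F : D ⥤ C}
    (α : WeightedCocone W F) : Prop :=
  (∀ β : WeightedCocone W F, ∃! t : α.pt ⟶ β.pt, ∀ (i : D) (u : W.obj (op i)),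
    α.leg i u ≫ t = β.leg i u) ∧
  (∀ {z : C} (r s : α.pt ⟶ z),
    (∀ (i : D) (u : W.obj (op i)), α.leg i u ≫ r ≤ α.leg i u ≫ s) → r ≤ s)

/-- `(α, q)` is an order-universal `P`-extension of the weighted cocone `ξ` over `F ⋙ P`. -/
def IsOrderUniversalExtension {A : Type u} [Category.{v} A] [∀ a b : A, PartialOrder (a ⟶ b)]
    {X : Type u'} [Category.{v'} X] [∀ x y : X, PartialOrder (x ⟶ y)]
    (P : A ⥤ X) {D : Type u₂} [Category.{v₂} D] {W : Dᵒᵖ ⥤ PartOrd.{w}} {F : D ⥤ A}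
    (ξ : WeightedCocone W (F ⋙ P)) (α : WeightedCocone W F)
    (q : ξ.pt ⟶ P.obj α.pt) : Prop :=
  (∀ (i : D) (u : W.obj (op i)), P.map (α.leg i u) = ξ.leg i u ≫ q) ∧
  (∀ (β : WeightedCocone W F) (f : ξ.pt ⟶ P.obj β.pt),
    (∀ (i : D) (u : W.obj (op i)), P.map (β.leg i u) = ξ.leg i u ≫ f) →
    ∃! t : α.pt ⟶ β.pt,
      (∀ (i : D) (u : W.obj (op i)), α.leg i u ≫ t = β.leg i u) ∧ q ≫ P.map t = f) ∧
  (∀ {z : A} (r s : α.pt ⟶ z), q ≫ P.map r ≤ q ≫ P.map s →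
    (∀ (i : D) (u : W.obj (op i)), α.leg i u ≫ r ≤ α.leg i u ≫ s) → r ≤ s)

/-- `P` is order-faithful. -/
def OrderFaithful {A : Type u} [Category.{v} A] [∀ a b : A, PartialOrder (a ⟶ b)]
    {X : Type u'} [Category.{v'} X] [∀ x y : X, PartialOrder (x ⟶ y)]
    (P : A ⥤ X) : Prop :=
  ∀ {a b : A} (r s : a ⟶ b), P.map r ≤ P.map s → r ≤ s

/-- `P` is order-solid: every weighted cocone `ξ : W → X(P D -, x)`, for every
order-enriched diagram `F : D ⥤ A` and every weight `W : Dᵒᵖ ⥤ Pos`, admits an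
order-universal `P`-extension. -/
def OrderSolid {A : Type u} [Category.{v} A] [∀ a b : A, PartialOrder (a ⟶ b)]
    {X : Type u'} [Category.{v'} X] [∀ x y : X, PartialOrder (x ⟶ y)]
    (P : A ⥤ X) : Prop :=
  ∀ (D : Type w) [Category.{w} D] [∀ i j : D, PartialOrder (i ⟶ j)] (F : D ⥤ A),
    (∀ {i j : D} (d d' : i ⟶ j), d ≤ d' → F.map d ≤ F.map d') →
    ∀ (W : Dᵒᵖ ⥤ PartOrd.{w}),
      (∀ {i j : D} (d d' : i ⟶ j), d ≤ d' →
        ∀ v : W.obj (op j), (W.map d.op).hom.toFun v ≤ (W.map d'.op).hom.toFun v) →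
      ∀ ξ : WeightedCocone W (F ⋙ P),
        ∃ (α : WeightedCocone W F) (q : ξ.pt ⟶ P.obj α.pt),
          IsOrderUniversalExtension P ξ α q

/-- `P` is strongly order-solid: every (possibly large) family admits a universal
`P`-extension whose comparison morphism is order-`P`-epic. -/
def StronglyOrderSolid {A : Type u} [Category.{v} A] [∀ a b : A, PartialOrder (a ⟶ b)]
    {X : Type u'} [Category.{v'} X] [∀ x y : X, PartialOrder (x ⟶ y)]
    (P : A ⥤ X) : Prop :=
  ∀ {I : Type w} (Dfam : I → A) (x : X) (ξ : ∀ i, P.obj (Dfam i) ⟶ x),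
    ∃ (a : A) (α : ∀ i, Dfam i ⟶ a) (q : x ⟶ P.obj a),
      (∀ i, P.map (α i) = ξ i ≫ q) ∧
      (∀ (b : A) (β : ∀ i, Dfam i ⟶ b) (f : x ⟶ P.obj b),
        (∀ i, P.map (β i) = ξ i ≫ f) →
        ∃! t : a ⟶ b, (∀ i, α i ≫ t = β i) ∧ q ≫ P.map t = f) ∧
      (∀ {b : A} (r s : a ⟶ b), q ≫ P.map r ≤ q ≫ P.map s → r ≤ s)

instance discreteHomPartialOrder {I : Type w} (i j : Discrete I) :
    PartialOrder (i ⟶ j) where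
  le _ _ := True
  le_refl _ := trivial
  le_trans _ _ _ _ _ := trivial
  le_antisymm a b _ _ := by
    obtain ⟨⟨ha⟩⟩ := a
    obtain ⟨⟨hb⟩⟩ := b
    rfl

theorem discrete_fam_nat {I : Type w} {C : Type u₂} [Category.{v₂} C]
    (G : Discrete I ⥤ C) (b : C) (β : ∀ i : I, G.obj ⟨i⟩ ⟶ b)
    {i j : Discrete I} (d : i ⟶ j) : G.map d ≫ β j.as = β i.as := by
  obtain ⟨i⟩ := i; obtain ⟨j⟩ := j
  have h : i = j := d.down.down
  cases h
  have hd : d = 𝟙 _ := Subsingleton.elim _ _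
  rw [hd, G.map_id, Category.id_comp]

theorem strong_orderFaithful
    {A : Type u} [Category.{v} A] [∀ a b : A, PartialOrder (a ⟶ b)]
    {X : Type u'} [Category.{v'} X] [∀ x y : X, PartialOrder (x ⟶ y)]
    (compMonoA : ∀ {a b c : A} (f f' : a ⟶ b) (g g' : b ⟶ c),
      f ≤ f' → g ≤ g' → f ≫ g ≤ f' ≫ g')
    (P : A ⥤ X) (hS : StronglyOrderSolid.{w} P) : OrderFaithful P := by
  intro a b r s hrs
  obtain ⟨c, α, q, h1, h2, h3⟩ :=
    hS (I := PUnit.{w+1}) (fun _ => a) (P.obj a) (fun _ => 𝟙 _)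
  obtain ⟨t, ⟨ht1, ht2⟩, -⟩ := h2 b (fun _ => r) (P.map r)
    (fun _ => by simp)
  obtain ⟨t', ⟨ht1', ht2'⟩, -⟩ := h2 b (fun _ => s) (P.map s)
    (fun _ => by simp)
  have htt : t ≤ t' := h3 t t' (by rw [ht2, ht2']; exact hrs)
  calc r = α PUnit.unit ≫ t := (ht1 _).symm
    _ ≤ α PUnit.unit ≫ t' := compMonoA _ _ _ _ le_rfl htt
    _ = s := ht1' _

/-- An order-enriched functor is strongly order-solid iff it is order-solid (in the
weighted-cocone sense) and order-faithful. -/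
theorem stronglyOrderSolid_iff_orderSolid_and_orderFaithful
    {A : Type u} [Category.{v} A] [∀ a b : A, PartialOrder (a ⟶ b)]
    {X : Type u'} [Category.{v'} X] [∀ x y : X, PartialOrder (x ⟶ y)]
    (compMonoA : ∀ {a b c : A} (f f' : a ⟶ b) (g g' : b ⟶ c),
      f ≤ f' → g ≤ g' → f ≫ g ≤ f' ≫ g')
    (compMonoX : ∀ {x y z : X} (f f' : x ⟶ y) (g g' : y ⟶ z),
      f ≤ f' → g ≤ g' → f ≫ g ≤ f' ≫ g')
    (P : A ⥤ X)
    (Pmono : ∀ {a b : A} (f g : a ⟶ b), f ≤ g → P.map f ≤ P.map g) :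
    StronglyOrderSolid.{w} P ↔ (OrderSolid.{w} P ∧ OrderFaithful P) := by
  constructor
  · intro hS
    have hfaith : OrderFaithful P := strong_orderFaithful compMonoA P hS
    have Pinj : ∀ {a b : A} (r s : a ⟶ b), P.map r = P.map s → r = s := by
      intro a b r s h
      exact le_antisymm (hfaith r s h.le) (hfaith s r h.ge)
    refine ⟨?_, hfaith⟩
    intro D _ _ F _ W _ ξ
    obtain ⟨a, αf, q, h1, h2, h3⟩ :=
      hS (I := Σ i : D, W.obj (op i)) (fun p => F.obj p.1) ξ.pt
        (fun p => ξ.leg p.1 p.2)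
    refine ⟨⟨a, fun i u => αf ⟨i, u⟩, ?_, ?_⟩, q, ?_, ?_, ?_⟩
    · intro i u u' huu
      refine hfaith _ _ ?_
      rw [h1 ⟨i, u⟩, h1 ⟨i, u'⟩]
      exact compMonoX _ _ _ _ (ξ.leg_mono i huu) le_rfl
    · intro i j d v
      refine Pinj _ _ ?_
      rw [P.map_comp, h1 ⟨j, v⟩, h1 ⟨i, (W.map d.op).hom.toFun v⟩,
        ← ξ.leg_nat d v]
      simp [Functor.comp_map]
    · exact fun i u => h1 ⟨i, u⟩
    · intro β f hf
      obtain ⟨t, ⟨ht1, ht2⟩, htu⟩ := h2 β.pt (fun p => β.leg p.1 p.2) f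
        (fun p => hf p.1 p.2)
      refine ⟨t, ⟨fun i u => ht1 ⟨i, u⟩, ht2⟩, ?_⟩
      intro t' ⟨ht1', ht2'⟩
      exact htu t' ⟨fun p => ht1' p.1 p.2, ht2'⟩
    · intro z r s hq _
      exact h3 r s hq
  · rintro ⟨hsolid, hfaith⟩
    intro I Dfam x ξ
    set D := Discrete I
    set F : D ⥤ A := Discrete.functor Dfam with hF
    have hsub : ∀ {i j : D} (d d' : i ⟶ j), d = d' := by
      intro i j d d'
      obtain ⟨⟨hd⟩⟩ := d; obtain ⟨⟨hd'⟩⟩ := d'; rfl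
    set W : Dᵒᵖ ⥤ PartOrd.{w} :=
      (Functor.const Dᵒᵖ).obj (PartOrd.of PUnit.{w+1}) with hW
    obtain ⟨α, q, e1, e2, e3⟩ := hsolid D F
      (fun d d' h => by rw [hsub d d'])
      W
      (fun d d' h v => le_rfl)
      { pt := x
        leg := fun i _ => ξ i.as
        leg_mono := fun i _ _ _ => le_rfl
        leg_nat := fun {i j} d v => by exact discrete_fam_nat (F ⋙ P) x ξ d }
    refine ⟨α.pt, fun i => α.leg ⟨i⟩ PUnit.unit, q, ?_, ?_, ?_⟩
    · exact fun i => e1 ⟨i⟩ PUnit.unit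
    · intro b β f hf
      obtain ⟨t, ⟨ht1, ht2⟩, htu⟩ := e2
        { pt := b
          leg := fun i _ => β i.as
          leg_mono := fun i _ _ _ => le_rfl
          leg_nat := fun {i j} d v => by exact discrete_fam_nat F b β d }
        f (fun i _ => hf i.as)
      refine ⟨t, ⟨fun i => ht1 ⟨i⟩ PUnit.unit, ht2⟩, ?_⟩
      intro t' ⟨ht1', ht2'⟩
      refine htu t' ⟨?_, ht2'⟩
      intro i u
      obtain ⟨i⟩ := i
      exact ht1' i
    · intro b r s hq
      refine e3 r s hq ?_
      intro i u
      refine hfaith _ _ ?_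
      rw [P.map_comp, P.map_comp, e1 i u, Category.assoc, Category.assoc]
      exact compMonoX _ _ _ _ le_rfl hq
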